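/- Let U₁, …, Uₙ be 2×2 unitary matrices and p₁, …, pₙ ≥ 0 with ∑ pᵢ = 1, and let ρ₁ ≠ ρ₂ be two distinct qubit density matrices such that ∑ᵢ pᵢ Uᵢ ρ₁ Uᵢ† = ∑ᵢ pᵢ Uᵢ ρ₂ Uᵢ†. Then the Shannon entropy of the key satisfies −∑ᵢ pᵢ log₂ pᵢ ≥ 1. (One bit of key is necessary to encrypt any two distinct qubit states.) -/

import Mathlib

open Matrix ComplexOrder

lemma trace_nonneg_of_psd {m : Type*} [Fintype m] [DecidableEq m]
    {M : Matrix m m ℂ} (h : M.PosSemidef) : 0 ≤ M.trace := by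
  rw [Matrix.trace]
  apply Finset.sum_nonneg
  intro i _
  have h2 := h.2 (Finsupp.single i 1)
  simpa [Finsupp.sum_single_index, Matrix.diag] using h2

theorem stmt_10 (n : ℕ) (U : Fin n → Matrix (Fin 2) (Fin 2) ℂ)
    (hU : ∀ i, U i ∈ Matrix.unitaryGroup (Fin 2) ℂ)
    (p : Fin n → ℝ) (hp : ∀ i, 0 ≤ p i) (hsum : ∑ i, p i = 1)
    (ρ1 ρ2 : Matrix (Fin 2) (Fin 2) ℂ)
    (h1 : ρ1.PosSemidef) (t1 : ρ1.trace = 1)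
    (h2 : ρ2.PosSemidef) (t2 : ρ2.trace = 1)
    (hne : ρ1 ≠ ρ2)
    (henc : ∑ i, (p i : ℂ) • (U i * ρ1 * (U i)ᴴ) = ∑ i, (p i : ℂ) • (U i * ρ2 * (U i)ᴴ)) :
    -(∑ i, p i * Real.logb 2 (p i)) ≥ 1 := by
  set Δ : Matrix (Fin 2) (Fin 2) ℂ := ρ1 - ρ2 with hΔdef
  have hΔne : Δ ≠ 0 := sub_ne_zero.mpr hne
  have hΔH : Δᴴ = Δ := by
    rw [hΔdef, conjTranspose_sub, h1.1, h2.1]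
  set A : Fin n → Matrix (Fin 2) (Fin 2) ℂ := fun i => U i * Δ * (U i)ᴴ with hAdef
  have hA0 : ∑ i, (p i : ℂ) • A i = 0 := by
    have h := sub_eq_zero.mpr henc
    rw [← Finset.sum_sub_distrib] at h
    rw [← h]
    apply Finset.sum_congr rfl
    intro i _
    rw [← smul_sub]
    congr 1
    rw [hAdef]
    simp only [hΔdef, mul_sub, sub_mul]
  have hUU : ∀ i, (U i)ᴴ * U i = 1 := by
    intro i
    have := (hU i).1
    rwa [Matrix.star_eq_conjTranspose] at this
  have hAH : ∀ i, (A i)ᴴ = A i := by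
    intro i
    simp [hAdef, conjTranspose_mul, hΔH, mul_assoc]
  have hcanc : ∀ i (X : Matrix (Fin 2) (Fin 2) ℂ), (U i)ᴴ * (U i * X) = X := by
    intro i X; rw [← mul_assoc, hUU i, one_mul]
  have hAtr : ∀ i, (A i * A i).trace = (Δ * Δ).trace := by
    intro i
    have hAA : A i * A i = U i * (Δ * Δ) * (U i)ᴴ := by
      simp [hAdef, mul_assoc, hcanc i]
    rw [hAA, Matrix.trace_mul_comm, ← mul_assoc, hUU i, one_mul]
  set T : ℝ := ((Δ * Δ).trace).re with hTdef
  -- T > 0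
  have hTform : T = ∑ j, ∑ k, Complex.normSq (Δ k j) := by
    have hΔΔ : Δ * Δ = Δᴴ * Δ := by rw [hΔH]
    rw [hTdef, hΔΔ]
    simp only [Matrix.trace, Matrix.diag_apply, Matrix.mul_apply, Matrix.conjTranspose_apply,
      Complex.re_sum]
    refine Finset.sum_congr rfl fun j _ => Finset.sum_congr rfl fun k _ => ?_
    simp [Complex.mul_re, Complex.normSq_apply]
  have hTpos : 0 < T := by
    obtain ⟨a, b, hab⟩ : ∃ a b, Δ a b ≠ 0 := by
      by_contra h
      push_neg at h
      exact hΔne (Matrix.ext fun a b => h a b)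
    rw [hTform]
    apply Finset.sum_pos'
    · intro j _; exact Finset.sum_nonneg fun k _ => Complex.normSq_nonneg _
    · refine ⟨b, Finset.mem_univ b, Finset.sum_pos' (fun k _ => Complex.normSq_nonneg _)
        ⟨a, Finset.mem_univ a, ?_⟩⟩
      exact Complex.normSq_pos.mpr hab
  -- lower bound on cross traces
  have hlb : ∀ i j, -T ≤ ((A i * A j).trace).re := by
    intro i j
    have hps := Matrix.posSemidef_conjTranspose_mul_self (A i + A j)
    have h0 := trace_nonneg_of_psd hps
    have hexp : ((A i + A j)ᴴ * (A i + A j)).trace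
        = (A i * A i).trace + (A i * A j).trace + ((A j * A i).trace + (A j * A j).trace) := by
      rw [conjTranspose_add, hAH i, hAH j, add_mul, mul_add, mul_add,
        Matrix.trace_add, Matrix.trace_add, Matrix.trace_add]
    rw [hexp, Matrix.trace_mul_comm (A j) (A i), hAtr i, hAtr j] at h0
    have hre := (Complex.le_def.mp h0).1
    simp only [Complex.add_re, Complex.zero_re] at hre
    linarith
  -- sum identity
  have hsum0 : ∀ j, ∑ i, p i * ((A i * A j).trace).re = 0 := by
    intro j
    have h := congrArg (fun M => ((M * A j).trace).re) hA0
    simp only [Finset.sum_mul, Matrix.smul_mul, Matrix.trace_sum, Matrix.trace_smul,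
      Matrix.zero_mul, Matrix.trace_zero, Complex.zero_re, Complex.re_sum,
      smul_eq_mul, Complex.mul_re, Complex.ofReal_re, Complex.ofReal_im] at h
    simpa using h
  -- every p j ≤ 1/2
  have hkey : ∀ j, p j ≤ 1/2 := by
    intro j
    have h0 := hsum0 j
    rw [← Finset.add_sum_erase _ _ (Finset.mem_univ j)] at h0
    have hjj : ((A j * A j).trace).re = T := by rw [hAtr j]
    have hps' : ∑ i ∈ Finset.univ.erase j, p i = 1 - p j := by
      have := Finset.add_sum_erase Finset.univ p (Finset.mem_univ j)
      rw [hsum] at this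
      linarith
    have hb : ∑ i ∈ Finset.univ.erase j, p i * (-T)
        ≤ ∑ i ∈ Finset.univ.erase j, p i * ((A i * A j).trace).re :=
      Finset.sum_le_sum fun i _ => mul_le_mul_of_nonneg_left (hlb i j) (hp i)
    rw [← Finset.sum_mul, hps'] at hb
    have hfin : p j * T ≤ (1 - p j) * T := by
      rw [hjj] at h0
      linarith
    nlinarith
  -- entropy bound
  have hterm : ∀ i ∈ Finset.univ, p i ≤ -(p i * Real.logb 2 (p i)) := by
    intro i _
    rcases eq_or_lt_of_le (hp i) with h0 | h0
    · simp [← h0]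
    · have hlog : Real.logb 2 (p i) ≤ -1 := by
        have hmono : Real.logb 2 (p i) ≤ Real.logb 2 (1/2) :=
          Real.logb_le_logb_of_le (by norm_num) h0 (hkey i)
        have heq : Real.logb 2 (1/2 : ℝ) = -1 := by
          rw [one_div, Real.logb_inv, Real.logb_self_eq_one (by norm_num)]
        linarith
      have := mul_le_mul_of_nonneg_left hlog (le_of_lt h0)
      linarith
  calc (1:ℝ) = ∑ i, p i := hsum.symm
    _ ≤ ∑ i, -(p i * Real.logb 2 (p i)) := Finset.sum_le_sum hterm
    _ = -(∑ i, p i * Real.logb 2 (p i)) := by rw [Finset.sum_neg_distrib]
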